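/- For any regular expression e and string w, w is accepted by the pointed-expression DFA of e (i.e., move*(•(e),w) has boolean component true) if and only if w ∈ L(e). -/

import Mathlib

namespace PointedRE

inductive PItem (α : Type) : Type
  | empty : PItem α
  | eps : PItem α
  | ch : α → PItem α
  | pch : α → PItem α
  | plus : PItem α → PItem α → PItem α
  | cat : PItem α → PItem α → PItem α
  | star : PItem α → PItem α

namespace PItem

variable {α : Type}

/-- The carrier: erase all points. -/
def carrier : PItem α → RegularExpression α
  | empty => 0
  | eps => 1
  | ch a => RegularExpression.char a
  | pch a => RegularExpression.char a
  | plus e1 e2 => carrier e1 + carrier e2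
  | cat e1 e2 => carrier e1 * carrier e2
  | star e => (carrier e).star

/-- ε(b) : {ε} if b, ∅ otherwise. -/
def ebool (b : Bool) : Language α := if b then 1 else 0

/-- The pointed language of a pointed item. -/
def Lp : PItem α → Language α
  | empty => 0
  | eps => 0
  | ch _ => 0
  | pch a => {[a]}
  | plus e1 e2 => Lp e1 + Lp e2
  | cat e1 e2 => Lp e1 * (carrier e2).matches' + Lp e2
  | star e => Lp e * KStar.kstar (carrier e).matches'

/-- A pointed regular expression (pre): a pointed item with a trailing boolean. -/
abbrev Pre (α : Type) := PItem α × Bool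

/-- The pointed language of a pre. -/
def LpP (p : Pre α) : Language α := Lp p.1 + ebool p.2

/-- Broadcasting a point inside a pointed item. -/
def broadcast : PItem α → Pre α
  | empty => (empty, false)
  | eps => (eps, true)
  | ch a => (pch a, false)
  | pch a => (pch a, false)
  | plus e1 e2 =>
      (plus (broadcast e1).1 (broadcast e2).1, (broadcast e1).2 || (broadcast e2).2)
  | cat e1 e2 =>
      if (broadcast e1).2 then
        (cat (broadcast e1).1 (broadcast e2).1, (broadcast e2).2)
      else (cat (broadcast e1).1 e2, false)
  | star e => (star (broadcast e).1, true)

/-- Lifted sum on pres. -/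
def oplus (p1 p2 : Pre α) : Pre α := (plus p1.1 p2.1, p1.2 || p2.2)

/-- Lifted concatenation on pres. -/
def odot (p1 p2 : Pre α) : Pre α :=
  if p1.2 then (cat p1.1 (broadcast p2.1).1, p2.2 || (broadcast p2.1).2)
  else (cat p1.1 p2.1, p2.2)

/-- Lifted Kleene star on pres. -/
def ostar (p : Pre α) : Pre α :=
  if p.2 then (star (broadcast p.1).1, true) else (star p.1, false)

/-- Broadcasting extended to pres. -/
def broadcastP (p : Pre α) : Pre α :=
  ((broadcast p.1).1, p.2 || (broadcast p.1).2)

/-- The move operation on pointed items. -/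
def move [DecidableEq α] (a : α) : PItem α → Pre α
  | empty => (empty, false)
  | eps => (eps, false)
  | ch b => (ch b, false)
  | pch b => if b = a then (ch b, true) else (ch b, false)
  | plus e1 e2 => oplus (move a e1) (move a e2)
  | cat e1 e2 => odot (move a e1) (move a e2)
  | star e => ostar (move a e)

/-- The move operation iterated along a string (on pres, ignoring the trailing point). -/
def moves [DecidableEq α] : Pre α → List α → Pre α
  | p, [] => p
  | p, a :: w => moves (move a p.1) w

/-- Embedding of regular expressions as point-free pointed items. -/
def embed : RegularExpression α → PItem α
  | .zero => empty
  | .epsilon => eps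
  | .char a => ch a
  | .plus e1 e2 => plus (embed e1) (embed e2)
  | .comp e1 e2 => cat (embed e1) (embed e2)
  | .star e => star (embed e)

/-- Read-back of a pointed item as a set of regular expressions. -/
def R : PItem α → Set (RegularExpression α)
  | empty => ∅
  | eps => ∅
  | ch _ => ∅
  | pch a => {RegularExpression.char a}
  | plus e1 e2 => R e1 ∪ R e2
  | cat e1 e2 => (fun r => r * carrier e2) '' R e1 ∪ R e2
  | star e => (fun r => r * (carrier e).star) '' R e

/-- Read-back of a pre. -/
def RP (p : Pre α) : Set (RegularExpression α) :=
  R p.1 ∪ (if p.2 then {1} else ∅)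

/-- The language of a set of regular expressions. -/
def LS (S : Set (RegularExpression α)) : Language α :=
  {w | ∃ r ∈ S, w ∈ r.matches'}

/-- The look-ahead normal form of a regular expression (without ε). -/
def nf : RegularExpression α → Set (RegularExpression α)
  | .zero => ∅
  | .epsilon => ∅
  | .char a => {RegularExpression.char a}
  | .plus e1 e2 => nf e1 ∪ nf e2
  | .comp e1 e2 =>
      if e1.matchEpsilon then (fun r => r * e2) '' nf e1 ∪ nf e2
      else (fun r => r * e2) '' nf e1
  | .star e => (fun r => r * e.star) '' nf e

/-- The look-ahead normal form with ε added when the expression is nullable. -/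
def nfe (e : RegularExpression α) : Set (RegularExpression α) :=
  nf e ∪ (if e.matchEpsilon then {1} else ∅)

/-- nf_ε lifted to sets of regular expressions. -/
def nfeS (S : Set (RegularExpression α)) : Set (RegularExpression α) :=
  ⋃ r ∈ S, nfe r

/-- Merge of two pointed items (meaningful when they share the same carrier). -/
def merge : PItem α → PItem α → PItem α
  | ch a, pch _ => pch a
  | plus e1 e2, plus f1 f2 => plus (merge e1 f1) (merge e2 f2)
  | cat e1 e2, cat f1 f2 => cat (merge e1 f1) (merge e2 f2)
  | star e, star f => star (merge e f)
  | e, _ => e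

/-- Merge extended to pres. -/
def mergeP (p q : Pre α) : Pre α := (merge p.1 q.1, p.2 || q.2)

end PItem
end PointedRE

open PointedRE PItem

section Aux

variable {α : Type}

lemma nil_not_mem_Lp : ∀ e : PItem α, [] ∉ Lp e
  | PItem.empty => by simp [Lp]
  | PItem.eps => by simp [Lp]
  | PItem.ch a => by simp [Lp]
  | PItem.pch a => fun h => by
      rw [Lp] at h; replace h : ([] : List α) = [a] := h
      exact List.cons_ne_nil a [] h.symm
  | PItem.plus e1 e2 => by
      simp only [Lp, Language.mem_add, not_or]
      exact ⟨nil_not_mem_Lp e1, nil_not_mem_Lp e2⟩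
  | PItem.cat e1 e2 => by
      simp only [Lp, Language.mem_add, Language.mem_mul, not_or]
      constructor
      · rintro ⟨u, hu, v, hv, huv⟩
        rcases List.append_eq_nil_iff.mp huv with ⟨rfl, rfl⟩
        exact nil_not_mem_Lp e1 hu
      · exact nil_not_mem_Lp e2
  | PItem.star e => by
      simp only [Lp, Language.mem_mul]
      rintro ⟨u, hu, v, hv, huv⟩
      rcases List.append_eq_nil_iff.mp huv with ⟨rfl, rfl⟩
      exact nil_not_mem_Lp e hu

lemma carrier_broadcast : ∀ e : PItem α, carrier (broadcast e).1 = carrier e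
  | PItem.empty => rfl
  | PItem.eps => rfl
  | PItem.ch a => rfl
  | PItem.pch a => rfl
  | PItem.plus e1 e2 => by
      simp [broadcast, carrier, carrier_broadcast e1, carrier_broadcast e2]
  | PItem.cat e1 e2 => by
      by_cases h : (broadcast e1).2 = true <;>
        simp [broadcast, h, carrier, carrier_broadcast e1, carrier_broadcast e2]
  | PItem.star e => by
      simp [broadcast, carrier, carrier_broadcast e]

lemma carrier_move [DecidableEq α] (a : α) :
    ∀ e : PItem α, carrier (move a e).1 = carrier e
  | PItem.empty => rfl
  | PItem.eps => rfl
  | PItem.ch b => rfl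
  | PItem.pch b => by
      by_cases h : b = a <;> simp [move, h, carrier]
  | PItem.plus e1 e2 => by
      simp [move, oplus, carrier, carrier_move a e1, carrier_move a e2]
  | PItem.cat e1 e2 => by
      by_cases h : (move a e1).2 = true <;>
        simp [move, odot, h, carrier, carrier_broadcast,
          carrier_move a e1, carrier_move a e2]
  | PItem.star e => by
      by_cases h : (move a e).2 = true <;>
        simp [move, ostar, h, carrier, carrier_broadcast, carrier_move a e]

lemma carrier_embed : ∀ r : RegularExpression α, carrier (embed r) = r
  | .zero => rfl
  | .epsilon => rfl
  | .char a => rfl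
  | .plus r1 r2 => by simp [embed, carrier, carrier_embed r1, carrier_embed r2]
  | .comp r1 r2 => by simp [embed, carrier, carrier_embed r1, carrier_embed r2]
  | .star r => by simp [embed, carrier, carrier_embed r]

lemma Lp_embed : ∀ r : RegularExpression α, Lp (embed r) = 0
  | .zero => rfl
  | .epsilon => rfl
  | .char a => rfl
  | .plus r1 r2 => by simp [embed, Lp, Lp_embed r1, Lp_embed r2]
  | .comp r1 r2 => by simp [embed, Lp, Lp_embed r1, Lp_embed r2]
  | .star r => by simp [embed, Lp, Lp_embed r]

lemma ebool_or (b c : Bool) : (ebool (b || c) : Language α) = ebool b + ebool c := by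
  cases b <;> cases c <;> · ext w; simp [ebool, Language.mem_add]

lemma mem_ebool_nil {b : Bool} {w : List α} (h : w ∈ (ebool b : Language α)) : w = [] := by
  cases b <;> simp [ebool] at h <;> simp [h]

lemma star_aux (X Y M : Language α) (b : Bool)
    (h : Y + ebool b = X + M) (hX : [] ∉ X) (hY : [] ∉ Y) :
    Y * KStar.kstar M + 1 = X * KStar.kstar M + KStar.kstar M := by
  ext w
  simp only [Language.mem_add, Language.mem_mul, Language.mem_one]
  constructor
  · rintro (⟨u, hu, v, hv, rfl⟩ | rfl)
    · have hu' : u ∈ X + M := by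
        rw [← h]; exact Or.inl hu
      rcases hu' with hu' | hu'
      · exact Or.inl ⟨u, hu', v, hv, rfl⟩
      · refine Or.inr ?_
        have : u ++ v ∈ 1 + M * KStar.kstar M := Or.inr (Language.append_mem_mul hu' hv)
        rwa [Language.one_add_self_mul_kstar_eq_kstar] at this
    · exact Or.inr (Language.nil_mem_kstar M)
  · rintro (⟨u, hu, v, hv, rfl⟩ | hw)
    · have hu' : u ∈ Y + ebool b := by rw [h]; exact Or.inl hu
      rcases hu' with hu' | hu'
      · exact Or.inl ⟨u, hu', v, hv, rfl⟩
      · exact absurd (mem_ebool_nil hu' ▸ hu) hX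
    · by_cases hw0 : w = []
      · exact Or.inr hw0
      · rcases Language.mem_kstar_iff_exists_nonempty.mp hw with ⟨S, rfl, hS⟩
        cases S with
        | nil => exact absurd rfl hw0
        | cons y S' =>
          refine Or.inl ⟨y, ?_, S'.flatten, ?_, by simp⟩
          · have hy := hS y (by simp)
            have : y ∈ Y + ebool b := by rw [h]; exact Or.inr hy.1
            rcases this with h' | h'
            · exact h'
            · exact absurd (mem_ebool_nil h') hy.2
          · exact Language.join_mem_kstar fun z hz => (hS z (by simp [hz])).1

lemma LpP_broadcast : ∀ e : PItem α,
    Lp (broadcast e).1 + ebool (broadcast e).2 = Lp e + (carrier e).matches'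
  | PItem.empty => by
      simp [broadcast, Lp, ebool, carrier]
  | PItem.eps => by
      simp [broadcast, Lp, ebool, carrier]
  | PItem.ch a => by
      ext w; simp [broadcast, Lp, ebool, carrier, Language.mem_add]
  | PItem.pch a => by
      ext w; simp [broadcast, Lp, ebool, carrier, Language.mem_add]
  | PItem.plus e1 e2 => by
      simp only [broadcast, Lp, carrier, RegularExpression.matches'_add, ebool_or]
      rw [add_add_add_comm, LpP_broadcast e1, LpP_broadcast e2, add_add_add_comm]
  | PItem.cat e1 e2 => by
      have IH1 := LpP_broadcast e1
      have IH2 := LpP_broadcast e2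
      by_cases h : (broadcast e1).2 = true
      · rw [h] at IH1
        simp only [broadcast, h, if_true, Lp, carrier, carrier_broadcast,
          RegularExpression.matches'_mul]
        have key : Lp (broadcast e1).1 * (carrier e2).matches' + (carrier e2).matches'
            = Lp e1 * (carrier e2).matches' + (carrier e1).matches' * (carrier e2).matches' := by
          have := congrArg (· * (carrier e2).matches') IH1
          simpa [add_mul, ebool] using this
        calc Lp (broadcast e1).1 * (carrier e2).matches' + Lp (broadcast e2).1
              + ebool (broadcast e2).2
            = Lp (broadcast e1).1 * (carrier e2).matches'
              + (Lp (broadcast e2).1 + ebool (broadcast e2).2) := by rw [add_assoc]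
          _ = Lp (broadcast e1).1 * (carrier e2).matches'
              + (Lp e2 + (carrier e2).matches') := by rw [IH2]
          _ = (Lp (broadcast e1).1 * (carrier e2).matches' + (carrier e2).matches') + Lp e2 := by
              abel
          _ = (Lp e1 * (carrier e2).matches'
              + (carrier e1).matches' * (carrier e2).matches') + Lp e2 := by rw [key]
          _ = Lp e1 * (carrier e2).matches' + Lp e2
              + (carrier e1).matches' * (carrier e2).matches' := by abel
      · rw [eq_false_of_ne_true h] at IH1
        simp only [ebool, Bool.false_eq_true, if_false, add_zero] at IH1
        simp only [broadcast, h, if_false, Lp, carrier, carrier_broadcast,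
          RegularExpression.matches'_mul, Bool.false_eq_true]
        rw [IH1, add_mul]
        simp only [ebool, Bool.false_eq_true, if_false, add_zero]
        abel
  | PItem.star e => by
      have IH := LpP_broadcast e
      simp only [broadcast, Lp, carrier, carrier_broadcast,
        RegularExpression.matches'_star, ebool]
      simp only [if_true]
      exact star_aux (Lp e) (Lp (broadcast e).1) (carrier e).matches' (broadcast e).2 IH
        (nil_not_mem_Lp e) (nil_not_mem_Lp _)

def deriv1 (a : α) (X : Language α) : Language α := {w | a :: w ∈ X}

lemma mem_deriv1 {a : α} {X : Language α} {w : List α} : w ∈ deriv1 a X ↔ a :: w ∈ X :=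
  Iff.rfl

lemma lpDeriv_add (a : α) (X Y : Language α) :
    deriv1 a (X + Y) = deriv1 a X + deriv1 a Y := by
  ext w
  rw [mem_deriv1, Language.mem_add, Language.mem_add, mem_deriv1, mem_deriv1]

lemma lpDeriv_mul (a : α) (X Y : Language α) (hX : [] ∉ X) :
    deriv1 a (X * Y) = deriv1 a X * Y := by
  ext w
  rw [mem_deriv1, Language.mem_mul, Language.mem_mul]
  simp only [mem_deriv1]
  constructor
  · rintro ⟨u, hu, v, hv, huv⟩
    cases u with
    | nil => exact absurd hu hX
    | cons b u' =>
      rw [List.cons_append] at huv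
      injection huv with h1 h2
      subst h1; subst h2
      exact ⟨u', hu, v, hv, rfl⟩
  · rintro ⟨u, hu, v, hv, rfl⟩
    exact ⟨a :: u, hu, v, hv, rfl⟩

lemma LpP_move [DecidableEq α] (a : α) : ∀ e : PItem α,
    Lp (move a e).1 + ebool (move a e).2 = deriv1 a (Lp e)
  | PItem.empty => by
      ext w
      refine iff_of_false ?_ (fun h => Language.notMem_zero (a :: w) h)
      rw [Language.mem_add]
      rintro (h | h) <;> exact Language.notMem_zero w h
  | PItem.eps => by
      ext w
      refine iff_of_false ?_ (fun h => Language.notMem_zero (a :: w) h)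
      rw [Language.mem_add]
      rintro (h | h) <;> exact Language.notMem_zero w h
  | PItem.ch b => by
      ext w
      refine iff_of_false ?_ (fun h => Language.notMem_zero (a :: w) h)
      rw [Language.mem_add]
      rintro (h | h) <;> exact Language.notMem_zero w h
  | PItem.pch b => by
      by_cases h : b = a
      · subst h
        rw [show move b (PItem.pch b) = (PItem.ch b, true) from by simp [move]]
        ext w
        rw [Language.mem_add]
        constructor
        · rintro (h' | h')
          · exact absurd h' (Language.notMem_zero w)
          · have hw : w = [] := (Language.mem_one w).mp h'
            subst hw
            exact rfl
        · intro h'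
          have hb : b :: w = [b] := h'
          right
          rw [List.cons.injEq] at hb
          exact (Language.mem_one w).mpr hb.2
      · rw [show move a (PItem.pch b) = (PItem.ch b, false) from by simp [move, h]]
        ext w
        rw [Language.mem_add]
        constructor
        · rintro (h' | h') <;> exact absurd h' (Language.notMem_zero w)
        · intro h'
          have hb : a :: w = [b] := h'
          injection hb with h1 h2
          exact absurd h1.symm h
  | PItem.plus e1 e2 => by
      simp only [move, oplus, Lp, ebool_or]
      rw [add_add_add_comm, LpP_move a e1, LpP_move a e2, lpDeriv_add]
  | PItem.cat e1 e2 => by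
      have IH1 := LpP_move a e1
      have IH2 := LpP_move a e2
      rw [show Lp (PItem.cat e1 e2) = Lp e1 * (carrier e2).matches' + Lp e2 from rfl,
        lpDeriv_add, lpDeriv_mul a _ _ (nil_not_mem_Lp e1), ← IH1, ← IH2]
      by_cases h : (move a e1).2 = true
      · simp only [move, odot, h, if_true, Lp, ebool_or, carrier_broadcast, carrier_move]
        have hB := LpP_broadcast (move a e2).1
        rw [carrier_move] at hB
        calc Lp (move a e1).1 * (carrier e2).matches'
              + Lp (broadcast (move a e2).1).1
              + (ebool (move a e2).2 + ebool (broadcast (move a e2).1).2)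
            = Lp (move a e1).1 * (carrier e2).matches'
              + (Lp (broadcast (move a e2).1).1 + ebool (broadcast (move a e2).1).2)
              + ebool (move a e2).2 := by abel
          _ = Lp (move a e1).1 * (carrier e2).matches'
              + (Lp (move a e2).1 + (carrier e2).matches')
              + ebool (move a e2).2 := by rw [hB]
          _ = (Lp (move a e1).1 + ebool true) * (carrier e2).matches'
              + (Lp (move a e2).1 + ebool (move a e2).2) := by
              rw [add_mul, show (ebool true : Language α) = 1 from rfl, one_mul]; abel
      · simp only [move, odot, h, if_false, Lp, carrier_move, Bool.false_eq_true]
        rw [show (ebool false : Language α) = 0 from rfl, add_zero, add_assoc]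
  | PItem.star e => by
      have IH := LpP_move a e
      rw [show Lp (PItem.star e) = Lp e * KStar.kstar (carrier e).matches' from rfl,
        lpDeriv_mul a _ _ (nil_not_mem_Lp e), ← IH]
      by_cases h : (move a e).2 = true
      · simp only [move, ostar, h, if_true, Lp, carrier_broadcast, carrier_move]
        have hB := LpP_broadcast (move a e).1
        rw [carrier_move] at hB
        rw [show (ebool true : Language α) = 1 from rfl]
        rw [star_aux (Lp (move a e).1) (Lp (broadcast (move a e).1).1)
          (carrier e).matches' (broadcast (move a e).1).2 hB
          (nil_not_mem_Lp _) (nil_not_mem_Lp _)]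
        rw [add_mul, one_mul]
      · simp only [move, ostar, h, if_false, Lp, carrier_move, Bool.false_eq_true]
        rw [show (ebool false : Language α) = 0 from rfl, add_zero, add_zero]

lemma moves_correct [DecidableEq α] : ∀ (w : List α) (p : Pre α),
    (moves p w).2 = true ↔ w ∈ Lp p.1 + ebool p.2
  | [], p => by
      simp only [moves, Language.mem_add]
      constructor
      · intro h
        refine Or.inr ?_
        have h' : p.2 = true := h
        rw [h']
        exact Language.nil_mem_one
      · rintro (h | h)
        · exact absurd h (nil_not_mem_Lp p.1)
        · cases hb : p.2
          · rw [hb] at h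
            exact absurd h (Language.notMem_zero [])
          · rfl
  | a :: w, p => by
      rw [show moves p (a :: w) = moves (move a p.1) w from rfl,
        moves_correct w (move a p.1), LpP_move a p.1]
      simp only [Language.mem_add, Set.mem_setOf_eq]
      constructor
      · exact Or.inl
      · rintro (h | h)
        · exact h
        · exact absurd (mem_ebool_nil h) (by simp)

end Aux

/-- w is accepted by the pointed-expression DFA of e iff w ∈ L(e). -/
theorem stmt12 {α : Type} [DecidableEq α] (r : RegularExpression α) (w : List α) :
    (moves (broadcast (embed r)) w).2 = true ↔ w ∈ r.matches' := by
  rw [moves_correct w (broadcast (embed r)), LpP_broadcast (embed r),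
    Lp_embed r, carrier_embed r, zero_add]
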